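/- Let q : ℝ³ → ℝ be continuous and nonnegative. If for every τ ∈ (1/2, T/2] the integral of q over the ellipsoid surface {|x−e|+|x| = 2τ} with respect to the weight 1/|2τx − |x|e| is zero, then q(x) = 0 for every x with |x| + |x−e| ≤ T (and |x|+|x−e| > 1). -/

import Mathlib

set_option maxHeartbeats 1000000
open MeasureTheory Metric Set
open scoped ENNReal NNReal

noncomputable def pt3 (a b c : ℝ) : EuclideanSpace ℝ (Fin 3) :=
  (EuclideanSpace.equiv (Fin 3) ℝ).symm ![a, b, c]

local notation "E₃" => EuclideanSpace ℝ (Fin 3)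
local notation "E₂" => EuclideanSpace ℝ (Fin 2)

lemma normsq {n : ℕ} (y : EuclideanSpace ℝ (Fin n)) : ‖y‖^2 = ∑ i, (y i)^2 := by
  rw [EuclideanSpace.norm_eq, Real.sq_sqrt (by positivity)]
  simp [Real.norm_eq_abs, sq_abs]

example : (pt3 1 0 0) 0 = 1 := rfl
example : (pt3 1 0 0) 1 = 0 := rfl

lemma norm_e : ‖pt3 1 0 0‖ = 1 := by
  have h := normsq (pt3 1 0 0)
  have h2 : ∑ i, ((pt3 1 0 0) i)^2 = 1 := by
    rw [Fin.sum_univ_three]; norm_num [pt3]; rfl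
  nlinarith [norm_nonneg (pt3 1 0 0)]

instance : Measure.IsAddHaarMeasure (μH[2] : Measure E₂) := by
  have h : (2:ℝ) = ((Module.finrank ℝ E₂ : ℕ) : ℝ) := by simp
  rw [h]; infer_instance



noncomputable def emb (j : Fin 3) (p : E₂) (t : ℝ) : E₃ :=
  (EuclideanSpace.equiv (Fin 3) ℝ).symm (Fin.insertNth j t p)

noncomputable def proj (j : Fin 3) (y : E₃) : E₂ :=
  (EuclideanSpace.equiv (Fin 2) ℝ).symm (fun k => y (j.succAbove k))



lemma normsq_split (j : Fin 3) (y : E₃) : ‖y‖^2 = (y j)^2 + ∑ k, (y (j.succAbove k))^2 := by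
  rw [normsq, Fin.sum_univ_succAbove (fun i => (y i)^2) j]

lemma emb_apply_same (j : Fin 3) (p : E₂) (t : ℝ) : emb j p t j = t := by
  simp [emb, Fin.insertNth_apply_same]

lemma emb_apply_succAbove (j : Fin 3) (p : E₂) (t : ℝ) (k : Fin 2) :
    emb j p t (j.succAbove k) = p k := by
  simp [emb, Fin.insertNth_apply_succAbove]

lemma emb_sub_normsq (j : Fin 3) (p p' : E₂) (t t' : ℝ) :
    ‖emb j p t - emb j p' t'‖^2 = (t - t')^2 + ‖p - p'‖^2 := by
  rw [normsq_split j, normsq]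
  congr 1
  · congr 1 <;> simp [emb_apply_same]
  · apply Finset.sum_congr rfl
    intro k _
    simp [emb_apply_succAbove]

lemma proj_emb (j : Fin 3) (p : E₂) (t : ℝ) : proj j (emb j p t) = p := by
  ext k; simp [proj, emb_apply_succAbove]

lemma emb_proj (j : Fin 3) (y : E₃) : emb j (proj j y) (y j) = y := by
  ext i
  rcases eq_or_ne i j with h | h
  · subst h; exact emb_apply_same _ _ _
  · obtain ⟨k, rfl⟩ := Fin.exists_succAbove_eq h
    rw [emb_apply_succAbove]; rfl

lemma proj_lip (j : Fin 3) : LipschitzWith 1 (proj j) := by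
  apply LipschitzWith.of_dist_le_mul
  intro y z
  rw [NNReal.coe_one, one_mul, dist_eq_norm, dist_eq_norm]
  have h1 : ‖proj j y - proj j z‖^2 ≤ ‖y - z‖^2 := by
    rw [normsq_split j, normsq]
    have : ∑ k, ((proj j y - proj j z) k)^2 = ∑ k, ((y - z) (j.succAbove k))^2 := by
      apply Finset.sum_congr rfl; intro k _; rfl
    rw [this]
    nlinarith [sq_nonneg ((y - z) j)]
  nlinarith [norm_nonneg (proj j y - proj j z), norm_nonneg (y - z)]

lemma emb_lip (j : Fin 3) (t : ℝ) : LipschitzWith 1 (fun p => emb j p t) := by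
  apply LipschitzWith.of_dist_le_mul
  intro p p'
  rw [NNReal.coe_one, one_mul, dist_eq_norm, dist_eq_norm]
  have := emb_sub_normsq j p p' t t
  nlinarith [norm_nonneg (emb j p t - emb j p' t), norm_nonneg (p - p')]

lemma emb_lip_t (j : Fin 3) (p : E₂) : LipschitzWith 1 (fun t => emb j p t) := by
  apply LipschitzWith.of_dist_le_mul
  intro t t'
  rw [NNReal.coe_one, one_mul, dist_eq_norm, Real.dist_eq]
  have := emb_sub_normsq j p p t t'
  have h2 : ‖emb j p t - emb j p t'‖^2 = (t-t')^2 := by simp at this ⊢; linarith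
  calc ‖emb j p t - emb j p t'‖ = |t - t'| := by
        rw [← Real.sqrt_sq_eq_abs, ← h2, Real.sqrt_sq (norm_nonneg _)]
    _ ≤ |t - t'| := le_refl _



lemma deriv_norm_line (w : E₃) (hw : w ≠ 0) (j : Fin 3) :
    HasDerivAt (fun t : ℝ => ‖w + t • EuclideanSpace.single j (1:ℝ)‖) (w j / ‖w‖) 0 := by
  have hw' : ‖w‖ ≠ 0 := norm_ne_zero_iff.2 hw
  set g : ℝ → ℝ := fun t => ‖w‖^2 + (2 * w j) * t + t^2 with hgdef
  have hg : ∀ t, ‖w + t • EuclideanSpace.single j (1:ℝ)‖ = Real.sqrt (g t) := by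
    intro t
    have h1 : ‖w + t • EuclideanSpace.single j (1:ℝ)‖^2 = g t := by
      rw [norm_add_sq_real]
      rw [real_inner_smul_right, EuclideanSpace.inner_single_right]
      rw [norm_smul, EuclideanSpace.norm_single]
      simp [hgdef]
      ring
    rw [← h1, Real.sqrt_sq (norm_nonneg _)]
  have hg0 : g 0 = ‖w‖^2 := by simp [hgdef]
  have hgne : g 0 ≠ 0 := by rw [hg0]; positivity
  have hder : HasDerivAt g (2 * w j) 0 := by
    have h1 : HasDerivAt (fun t : ℝ => (2 * w j) * t) (2 * w j) 0 := by
      simpa using (hasDerivAt_id (0:ℝ)).const_mul (2 * w j)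
    have h2 : HasDerivAt (fun t : ℝ => t^2) 0 (0:ℝ) := by
      simpa using hasDerivAt_pow 2 (0:ℝ)
    have := ((hasDerivAt_const (0:ℝ) (‖w‖^2)).add h1).add h2
    simp only [zero_add, add_zero] at this
    exact this
  have := (Real.hasDerivAt_sqrt hgne).comp 0 hder
  have heq : (fun t => Real.sqrt (g t)) = fun t : ℝ => ‖w + t • EuclideanSpace.single j (1:ℝ)‖ :=
    funext fun t => (hg t).symm
  rw [show (Real.sqrt ∘ g) = fun t => Real.sqrt (g t) from rfl, heq] at this
  refine this.congr_deriv ?_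
  rw [hg0, Real.sqrt_sq (norm_nonneg _)]
  field_simp

lemma crossing {φ : ℝ → ℝ} {c t₀ : ℝ} (h : HasDerivAt φ c t₀) (hc : c ≠ 0)
    {ε : ℝ} (hε : 0 < ε) :
    ∃ t₁ t₂, |t₁ - t₀| < ε ∧ |t₂ - t₀| < ε ∧ φ t₁ < φ t₀ ∧ φ t₀ < φ t₂ := by
  rw [hasDerivAt_iff_tendsto_slope] at h
  have hball : ∀ᶠ t in nhdsWithin t₀ {t₀}ᶜ, dist (slope φ t₀ t) c < |c| :=
    (Metric.tendsto_nhds.mp h) |c| (abs_pos.2 hc)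
  obtain ⟨δ, hδ, hδ'⟩ := Metric.mem_nhdsWithin_iff.mp hball
  set η := min δ ε / 2 with hη
  have hη0 : 0 < η := by positivity
  have hηδ : η < δ := by
    rcases min_le_left δ ε with h'; simp only [hη]; linarith [min_le_left δ ε]
  have hηε : η < ε := by linarith [min_le_right δ ε]
  have hmem : ∀ s : ℝ, s ≠ 0 → |s| = η → dist (slope φ t₀ (t₀ + s)) c < |c| := by
    intro s hs habs
    apply hδ'
    constructor
    · simp [Real.dist_eq, habs, hηδ]
    · simp [hs]
  have hslope : ∀ s : ℝ, φ (t₀ + s) - φ t₀ = slope φ t₀ (t₀ + s) * s := by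
    intro s
    rcases eq_or_ne s 0 with rfl | hs
    · simp
    · rw [slope_def_field]; field_simp; rw [add_sub_cancel_left, mul_div_cancel_left₀ _ hs]
  have hp := hmem η hη0.ne' (abs_of_pos hη0)
  have hm := hmem (-η) (by linarith) (by rw [abs_neg, abs_of_pos hη0])
  rw [Real.dist_eq] at hp hm
  have hsp := hslope η
  have hsm := hslope (-η)
  rcases lt_or_gt_of_ne hc with hneg | hpos
  · refine ⟨t₀ + η, t₀ + -η, ?_, ?_, ?_, ?_⟩
    · rw [add_sub_cancel_left, abs_of_pos hη0]; exact hηε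
    · rw [add_sub_cancel_left, abs_neg, abs_of_pos hη0]; exact hηε
    · nlinarith [abs_of_neg hneg, abs_lt.mp hp]
    · nlinarith [abs_of_neg hneg, abs_lt.mp hm]
  · refine ⟨t₀ + -η, t₀ + η, ?_, ?_, ?_, ?_⟩
    · rw [add_sub_cancel_left, abs_neg, abs_of_pos hη0]; exact hηε
    · rw [add_sub_cancel_left, abs_of_pos hη0]; exact hηε
    · nlinarith [abs_of_pos hpos, abs_lt.mp hm]
    · nlinarith [abs_of_pos hpos, abs_lt.mp hp]







-- normalization map is 2-Lipschitz on the set where norm ≥ 1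
lemma normalize_lipschitz : LipschitzOnWith 2 (fun u : E₃ => ‖u‖⁻¹ • u) {u | 1 ≤ ‖u‖} := by
  apply LipschitzOnWith.of_dist_le_mul
  intro x hx y hy
  simp only [Set.mem_setOf_eq] at hx hy
  have hx0 : (0:ℝ) < ‖x‖ := lt_of_lt_of_le one_pos hx
  have hy0 : (0:ℝ) < ‖y‖ := lt_of_lt_of_le one_pos hy
  rw [dist_eq_norm, dist_eq_norm, show ((2:NNReal):ℝ) = 2 by norm_num]
  have key : ‖x‖⁻¹ • x - ‖y‖⁻¹ • y = ‖x‖⁻¹ • (x - y) + (‖x‖⁻¹ - ‖y‖⁻¹) • y := by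
    module
  rw [key]
  have h1 : ‖‖x‖⁻¹ • (x - y)‖ = ‖x‖⁻¹ * ‖x - y‖ := by
    rw [norm_smul, Real.norm_eq_abs, abs_of_pos (by positivity)]
  have h2 : ‖(‖x‖⁻¹ - ‖y‖⁻¹) • y‖ ≤ ‖x‖⁻¹ * ‖x - y‖ := by
    rw [norm_smul, Real.norm_eq_abs]
    have : |‖x‖⁻¹ - ‖y‖⁻¹| = |‖y‖ - ‖x‖| / (‖x‖ * ‖y‖) := by
      rw [show ‖x‖⁻¹ - ‖y‖⁻¹ = (‖y‖ - ‖x‖) / (‖x‖ * ‖y‖) by field_simp,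
        abs_div, abs_of_pos (by positivity : (0:ℝ) < ‖x‖ * ‖y‖)]
    rw [this]
    have h3 : |‖y‖ - ‖x‖| ≤ ‖x - y‖ := by
      rw [abs_sub_comm]
      exact abs_norm_sub_norm_le x y
    calc |‖y‖ - ‖x‖| / (‖x‖ * ‖y‖) * ‖y‖ = |‖y‖ - ‖x‖| / ‖x‖ := by field_simp
      _ ≤ ‖x - y‖ / ‖x‖ := by gcongr
      _ = ‖x‖⁻¹ * ‖x - y‖ := by field_simp
  calc ‖‖x‖⁻¹ • (x - y) + (‖x‖⁻¹ - ‖y‖⁻¹) • y‖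
      ≤ ‖‖x‖⁻¹ • (x - y)‖ + ‖(‖x‖⁻¹ - ‖y‖⁻¹) • y‖ := norm_add_le _ _
    _ ≤ ‖x‖⁻¹ * ‖x - y‖ + ‖x‖⁻¹ * ‖x - y‖ := by rw [h1]; linarith
    _ = 2 * (‖x‖⁻¹ * ‖x - y‖) := by ring
    _ ≤ 2 * (1 * ‖x - y‖) := by
        have hinv : ‖x‖⁻¹ * ‖x‖ = 1 := inv_mul_cancel₀ hx0.ne'
        have : ‖x‖⁻¹ ≤ 1 := by nlinarith
        have := mul_le_mul_of_nonneg_right this (norm_nonneg (x - y))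
        linarith
    _ = 2 * ‖x - y‖ := by ring







noncomputable def Psi (τ : ℝ) : E₃ → E₃ := fun u =>
  (EuclideanSpace.equiv (Fin 3) ℝ).symm
    ![1/2 + τ * u 0, Real.sqrt (τ^2 - 1/4) * u 1, Real.sqrt (τ^2 - 1/4) * u 2]

lemma ellipsoid_subset (τ : ℝ) (hτ : 1/2 < τ) :
    {y : E₃ | ‖y - pt3 1 0 0‖ + ‖y‖ = 2*τ} ⊆ Psi τ '' (Metric.sphere 0 1) := by
  intro y hy
  simp only [Set.mem_setOf_eq] at hy
  have hτ0 : 0 < τ := by linarith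
  set b := Real.sqrt (τ^2 - 1/4) with hbdef
  have hb2 : b^2 = τ^2 - 1/4 := Real.sq_sqrt (by nlinarith)
  have hb0 : 0 < b := Real.sqrt_pos.mpr (by nlinarith)
  refine ⟨(EuclideanSpace.equiv (Fin 3) ℝ).symm ![(y 0 - 1/2)/τ, y 1 / b, y 2 / b], ?_, ?_⟩
  · rw [mem_sphere_zero_iff_norm]
    have hy1 : ‖y‖^2 = (y 0)^2 + (y 1)^2 + (y 2)^2 := by
      rw [normsq, Fin.sum_univ_three]
    have hy2 : ‖y - pt3 1 0 0‖^2 = (y 0 - 1)^2 + (y 1)^2 + (y 2)^2 := by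
      rw [normsq, Fin.sum_univ_three]
      have e0 : (y - pt3 1 0 0) 0 = y 0 - 1 := rfl
      have e1 : (y - pt3 1 0 0) 1 = y 1 - 0 := rfl
      have e2 : (y - pt3 1 0 0) 2 = y 2 - 0 := rfl
      rw [e0, e1, e2]; ring
    set r := ‖y‖ with hrdef
    set r' := ‖y - pt3 1 0 0‖ with hr'def
    have hr : 0 ≤ r := norm_nonneg _
    have hr' : 0 ≤ r' := norm_nonneg _
    have hdiff : (r - r') * (2*τ) = 2*(y 0) - 1 := by nlinarith [hy1, hy2, hy]
    have h1 : r - r' = (2*(y 0)-1)/(2*τ) := by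
      field_simp
      linarith [hdiff]
    have h2' : (2*(y 0)-1)/(2*τ) = 2*((2*(y 0)-1)/(4*τ)) := by
      field_simp; ring
    have hrval : r = τ + (2*(y 0) - 1)/(4*τ) := by
      rw [h2'] at h1; linarith [hy]
    have hrsq : (τ + (2*(y 0) - 1)/(4*τ))^2 = (y 0)^2 + (y 1)^2 + (y 2)^2 := by
      rw [← hrval]; exact hy1
    have hrsq' : (4*τ^2 + (2*(y 0) - 1))^2 = 16*τ^2*((y 0)^2 + (y 1)^2 + (y 2)^2) := by
      field_simp at hrsq
      nlinarith [hrsq]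
    have husq : ((y 0 - 1/2)/τ)^2 + (y 1 / b)^2 + (y 2 / b)^2 = 1 := by
      have hbne : b ≠ 0 := hb0.ne'
      have hτne : τ ≠ 0 := hτ0.ne'
      field_simp
      linear_combination ((2*(y 0)-1)^2 - 4*τ^2) * hb2 - (1/4) * hrsq' 
    clear hrsq hrsq' hdiff h1 h2' hrval hy1 hy2
    have hnu : ‖(EuclideanSpace.equiv (Fin 3) ℝ).symm ![(y 0 - 1/2)/τ, y 1 / b, y 2 / b]‖^2
        = 1 := by
      rw [normsq, Fin.sum_univ_three]
      have c0 : ((EuclideanSpace.equiv (Fin 3) ℝ).symm ![(y 0 - 1/2)/τ, y 1 / b, y 2 / b]) 0 = (y 0 - 1/2)/τ := rfl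
      have c1 : ((EuclideanSpace.equiv (Fin 3) ℝ).symm ![(y 0 - 1/2)/τ, y 1 / b, y 2 / b]) 1 = y 1 / b := rfl
      have c2 : ((EuclideanSpace.equiv (Fin 3) ℝ).symm ![(y 0 - 1/2)/τ, y 1 / b, y 2 / b]) 2 = y 2 / b := rfl
      rw [c0, c1, c2]
      exact husq
    nlinarith [norm_nonneg ((EuclideanSpace.equiv (Fin 3) ℝ).symm ![(y 0 - 1/2)/τ, y 1 / b, y 2 / b]), hnu]
  · have hbne : b ≠ 0 := hb0.ne'
    have hτne : τ ≠ 0 := hτ0.ne'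
    ext i
    fin_cases i
    · show 1/2 + τ * ((y 0 - 1/2)/τ) = y 0
      field_simp
      ring
    · show b * (y 1 / b) = y 1
      field_simp
    · show b * (y 2 / b) = y 2
      field_simp

noncomputable def face (j : Fin 3) : Set E₃ :=
  {u | (u j)^2 = 1 ∧ 1 ≤ ‖u‖ ∧ ‖u‖ ≤ Real.sqrt 3}

lemma sphere_cover (s : E₃) (hs : ‖s‖ = 1) :
    ∃ j : Fin 3, s ∈ (fun u : E₃ => ‖u‖⁻¹ • u) '' (face j) := by
  have hsum : ∑ i, (s i)^2 = 1 := by rw [← normsq, hs]; norm_num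
  obtain ⟨j, hj⟩ : ∃ j : Fin 3, 1/3 ≤ (s j)^2 := by
    by_contra h
    push_neg at h
    rw [Fin.sum_univ_three] at hsum
    nlinarith [h 0, h 1, h 2]
  have hsj : s j ≠ 0 := by intro h0; rw [h0] at hj; norm_num at hj
  have ha : 0 < |s j| := abs_pos.2 hsj
  have hale : |s j| ≤ 1 := by
    have h1 : (s j)^2 ≤ ∑ i, (s i)^2 :=
      Finset.single_le_sum (f := fun i => (s i)^2) (fun i _ => sq_nonneg _) (Finset.mem_univ j)
    rw [hsum] at h1
    nlinarith [abs_nonneg (s j), sq_abs (s j)]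
  refine ⟨j, |s j|⁻¹ • s, ?_, ?_⟩
  · have hnu : ‖|s j|⁻¹ • s‖ = |s j|⁻¹ := by
      rw [norm_smul, hs, Real.norm_eq_abs, abs_of_pos (by positivity), mul_one]
    refine ⟨?_, ?_, ?_⟩
    · have hc : (|s j|⁻¹ • s) j = |s j|⁻¹ * s j := rfl
      rw [hc]
      rw [mul_pow, ← sq_abs (s j), inv_pow]
      field_simp
    · rw [hnu]
      nlinarith [mul_inv_cancel₀ ha.ne', inv_nonneg.mpr ha.le]
    · rw [hnu]
      have hge : Real.sqrt (1/3) ≤ |s j| := by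
        rw [show |s j| = Real.sqrt ((s j)^2) from (Real.sqrt_sq_eq_abs _).symm]
        exact Real.sqrt_le_sqrt hj
      have hprod : Real.sqrt (1/3) * Real.sqrt 3 = 1 := by
        rw [← Real.sqrt_mul (by norm_num)]
        norm_num
      have h1s : 1 ≤ Real.sqrt 3 * |s j| := by
        nlinarith [mul_le_mul_of_nonneg_right hge (Real.sqrt_nonneg 3)]
      nlinarith [mul_nonneg (sub_nonneg.2 h1s) (inv_nonneg.mpr ha.le),
        mul_inv_cancel₀ ha.ne']
  · have hnu : ‖|s j|⁻¹ • s‖ = |s j|⁻¹ := by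
      rw [norm_smul, hs, Real.norm_eq_abs, abs_of_pos (by positivity), mul_one]
    show ‖|s j|⁻¹ • s‖⁻¹ • (|s j|⁻¹ • s) = s
    rw [hnu, inv_inv, smul_smul, mul_inv_cancel₀ ha.ne', one_smul]

lemma face_subset (j : Fin 3) :
    face j ⊆ (fun p => emb j p 1) '' (closedBall (0:E₂) (Real.sqrt 3)) ∪
      (fun p => emb j p (-1)) '' (closedBall (0:E₂) (Real.sqrt 3)) := by
  rintro u ⟨h1, _, h3⟩
  have hp : ‖proj j u‖ ≤ Real.sqrt 3 := by
    have hle : ‖proj j u‖^2 ≤ ‖u‖^2 := by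
      rw [normsq_split j u, normsq]
      have : ∑ k, ((proj j u) k)^2 = ∑ k, (u (j.succAbove k))^2 :=
        Finset.sum_congr rfl fun k _ => rfl
      rw [this]
      nlinarith [sq_nonneg (u j)]
    nlinarith [norm_nonneg (proj j u), norm_nonneg u, Real.sqrt_nonneg 3]
  have hmem : proj j u ∈ closedBall (0:E₂) (Real.sqrt 3) := by
    rwa [mem_closedBall_zero_iff]
  have hcases : u j = 1 ∨ u j = -1 := by
    have : (u j - 1) * (u j + 1) = 0 := by nlinarith
    rcases mul_eq_zero.mp this with h | h
    · left; linarith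
    · right; linarith
  rcases hcases with h | h
  · left; exact ⟨proj j u, hmem, by rw [← h]; exact emb_proj j u⟩
  · right; exact ⟨proj j u, hmem, by rw [← h]; exact emb_proj j u⟩

lemma face_finite (j : Fin 3) : μH[2] (face j) < ⊤ := by
  have hD : μH[2] (closedBall (0:E₂) (Real.sqrt 3)) < ⊤ :=
    (isCompact_closedBall _ _).measure_lt_top
  have himg : ∀ t : ℝ, μH[2] ((fun p => emb j p t) '' (closedBall (0:E₂) (Real.sqrt 3))) < ⊤ := by
    intro t
    refine lt_of_le_of_lt ((emb_lip j t).hausdorffMeasure_image_le (by norm_num) _) ?_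
    simp only [ENNReal.coe_one, ENNReal.one_rpow, one_mul]
    exact hD
  refine lt_of_le_of_lt (measure_mono (face_subset j)) ?_
  exact lt_of_le_of_lt (measure_union_le _ _) (ENNReal.add_lt_top.mpr ⟨himg 1, himg (-1)⟩)

lemma psi_lip (τ : ℝ) (hτ : 1/2 < τ) : LipschitzWith (Real.toNNReal τ) (Psi τ) := by
  have hτ0 : (0:ℝ) < τ := by linarith
  have hb2 : (Real.sqrt (τ^2 - 1/4))^2 = τ^2 - 1/4 := Real.sq_sqrt (by nlinarith)
  apply LipschitzWith.of_dist_le_mul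
  intro u v
  rw [dist_eq_norm, dist_eq_norm, Real.coe_toNNReal _ hτ0.le]
  have hsq : ‖Psi τ u - Psi τ v‖^2 ≤ τ^2 * ‖u - v‖^2 := by
    rw [normsq, normsq, Fin.sum_univ_three, Fin.sum_univ_three]
    have c0 : (Psi τ u - Psi τ v) 0 = τ * (u 0 - v 0) := by
      show (1/2 + τ * u 0) - (1/2 + τ * v 0) = _; ring
    have c1 : (Psi τ u - Psi τ v) 1 = Real.sqrt (τ^2 - 1/4) * (u 1 - v 1) := by
      show Real.sqrt (τ^2 - 1/4) * u 1 - Real.sqrt (τ^2 - 1/4) * v 1 = _; ring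
    have c2 : (Psi τ u - Psi τ v) 2 = Real.sqrt (τ^2 - 1/4) * (u 2 - v 2) := by
      show Real.sqrt (τ^2 - 1/4) * u 2 - Real.sqrt (τ^2 - 1/4) * v 2 = _; ring
    have d0 : (u - v) 0 = u 0 - v 0 := rfl
    have d1 : (u - v) 1 = u 1 - v 1 := rfl
    have d2 : (u - v) 2 = u 2 - v 2 := rfl
    rw [c0, c1, c2, d0, d1, d2]
    nlinarith [sq_nonneg (u 0 - v 0), sq_nonneg (u 1 - v 1), sq_nonneg (u 2 - v 2), hb2]
  nlinarith [norm_nonneg (Psi τ u - Psi τ v), norm_nonneg (u - v), hτ0,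
    mul_nonneg hτ0.le (norm_nonneg (u - v))]

lemma ellipsoid_finite (τ : ℝ) (hτ : 1/2 < τ) :
    μH[2] {y : E₃ | ‖y - pt3 1 0 0‖ + ‖y‖ = 2*τ} < ⊤ := by
  have hnf : ∀ j : Fin 3, μH[2] ((fun u : E₃ => ‖u‖⁻¹ • u) '' (face j)) < ⊤ := by
    intro j
    have hlip : LipschitzOnWith 2 (fun u : E₃ => ‖u‖⁻¹ • u) (face j) :=
      normalize_lipschitz.mono (fun u hu => hu.2.1)
    refine lt_of_le_of_lt (hlip.hausdorffMeasure_image_le (by norm_num)) ?_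
    exact ENNReal.mul_lt_top (by norm_num) (face_finite j)
  have hpf : ∀ j : Fin 3,
      μH[2] (Psi τ '' ((fun u : E₃ => ‖u‖⁻¹ • u) '' (face j))) < ⊤ := by
    intro j
    refine lt_of_le_of_lt ((psi_lip τ hτ).hausdorffMeasure_image_le (by norm_num) _) ?_
    exact ENNReal.mul_lt_top
      (ENNReal.rpow_lt_top_of_nonneg (by norm_num) ENNReal.coe_ne_top) (hnf j)
  have hsub : {y : E₃ | ‖y - pt3 1 0 0‖ + ‖y‖ = 2*τ} ⊆
      ⋃ j : Fin 3, Psi τ '' ((fun u : E₃ => ‖u‖⁻¹ • u) '' (face j)) := by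
    intro y hy
    obtain ⟨u, hu, huy⟩ := ellipsoid_subset τ hτ hy
    obtain ⟨j, hj⟩ := sphere_cover u (mem_sphere_zero_iff_norm.mp hu)
    exact Set.mem_iUnion.2 ⟨j, ⟨u, hj, huy⟩⟩
  refine lt_of_le_of_lt (measure_mono hsub) ?_
  refine lt_of_le_of_lt (measure_iUnion_le _) ?_
  rw [tsum_fintype]
  exact ENNReal.sum_lt_top.mpr fun j _ => hpf j

lemma denom_ne (τ : ℝ) (hτ : 1/2 < τ) (y : E₃) (hy : ‖y - pt3 1 0 0‖ + ‖y‖ = 2*τ) :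
    (2*τ) • y - ‖y‖ • pt3 1 0 0 ≠ 0 := by
  intro h
  rw [sub_eq_zero] at h
  have h4 := congrArg norm h
  rw [norm_smul, norm_smul, norm_e, Real.norm_eq_abs, Real.norm_eq_abs,
    abs_of_pos (by linarith : (0:ℝ) < 2*τ), abs_of_nonneg (norm_nonneg y), mul_one] at h4
  have hy0 : ‖y‖ = 0 := by nlinarith [norm_nonneg y]
  rw [norm_eq_zero] at hy0
  subst hy0
  rw [zero_sub, norm_neg, norm_e, norm_zero] at hy
  linarith

lemma ellipsoid_pos (τ : ℝ) (hτ : 1/2 < τ) (x : E₃)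
    (hx : ‖x - pt3 1 0 0‖ + ‖x‖ = 2*τ) {r : ℝ} (hr : 0 < r) :
    0 < μH[2] ({y : E₃ | ‖y - pt3 1 0 0‖ + ‖y‖ = 2*τ} ∩ ball x r) := by
  have hx0 : x ≠ 0 := by
    rintro rfl
    rw [zero_sub, norm_neg, norm_e, norm_zero] at hx
    linarith
  have hxe : x - pt3 1 0 0 ≠ 0 := by
    intro h
    rw [h, norm_zero, zero_add] at hx
    have h4 := congrArg norm (sub_eq_zero.mp h : x = pt3 1 0 0)
    rw [norm_e] at h4
    linarith
  have ha : (0:ℝ) < ‖x‖ := norm_pos_iff.2 hx0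
  have hb : (0:ℝ) < ‖x - pt3 1 0 0‖ := norm_pos_iff.2 hxe
  -- the "gradient" is nonzero
  have hu : ‖x‖⁻¹ • x + ‖x - pt3 1 0 0‖⁻¹ • (x - pt3 1 0 0) ≠ 0 := by
    intro hu0
    have h2 : ‖x - pt3 1 0 0‖ • x + ‖x‖ • (x - pt3 1 0 0) = 0 := by
      have h5 := congrArg (fun v : E₃ => (‖x‖ * ‖x - pt3 1 0 0‖) • v) hu0
      simp only [smul_add, smul_smul, smul_zero] at h5
      rw [show ‖x‖ * ‖x - pt3 1 0 0‖ * ‖x‖⁻¹ = ‖x - pt3 1 0 0‖ by field_simp,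
          show ‖x‖ * ‖x - pt3 1 0 0‖ * ‖x - pt3 1 0 0‖⁻¹ = ‖x‖ by field_simp] at h5
      exact h5
    have h3 : (‖x - pt3 1 0 0‖ + ‖x‖) • x = ‖x‖ • pt3 1 0 0 := by
      rw [← sub_eq_zero,
        show (‖x - pt3 1 0 0‖ + ‖x‖) • x - ‖x‖ • pt3 1 0 0
          = ‖x - pt3 1 0 0‖ • x + ‖x‖ • (x - pt3 1 0 0) by module, h2]
    have h4 := congrArg norm h3
    rw [norm_smul, norm_smul, norm_e, Real.norm_eq_abs, Real.norm_eq_abs,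
      abs_of_pos (by linarith : (0:ℝ) < ‖x - pt3 1 0 0‖ + ‖x‖),
      abs_of_pos ha, mul_one] at h4
    have : ‖x - pt3 1 0 0‖ + ‖x‖ = 1 := by nlinarith
    linarith
  obtain ⟨j, hj⟩ : ∃ j : Fin 3, ‖x‖⁻¹ * x j + ‖x - pt3 1 0 0‖⁻¹ * ((x - pt3 1 0 0) j) ≠ 0 := by
    by_contra hcon
    push_neg at hcon
    apply hu
    ext i
    exact hcon i
  set c : ℝ := (x - pt3 1 0 0) j / ‖x - pt3 1 0 0‖ + x j / ‖x‖ with hcdef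
  have hcne : c ≠ 0 := by
    have : c = ‖x‖⁻¹ * x j + ‖x - pt3 1 0 0‖⁻¹ * ((x - pt3 1 0 0) j) := by
      rw [hcdef]; field_simp; ring
    rw [this]; exact hj
  set x' : E₂ := proj j x with hx'def
  set t₀ : ℝ := x j with ht₀def
  have hembx : emb j x' t₀ = x := emb_proj j x
  -- derivative of the defining function along the j-th coordinate line
  set ψ : ℝ → ℝ := fun s =>
    ‖(x - pt3 1 0 0) + s • EuclideanSpace.single j (1:ℝ)‖ +
      ‖x + s • EuclideanSpace.single j (1:ℝ)‖ with hψdef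
  have hψder : HasDerivAt ψ c 0 := by
    have h1 := deriv_norm_line (x - pt3 1 0 0) hxe j
    have h2 := deriv_norm_line x hx0 j
    exact h1.add h2
  set φ : ℝ → ℝ := fun t => ‖emb j x' t - pt3 1 0 0‖ + ‖emb j x' t‖ with hφdef
  have hembline : ∀ t : ℝ, emb j x' t = x + (t - t₀) • EuclideanSpace.single j (1:ℝ) := by
    intro t
    ext i
    rcases eq_or_ne i j with h | h
    · subst h
      have e1 : emb i x' t i = t := emb_apply_same i x' t
      have e2 : (x + (t - t₀) • EuclideanSpace.single i (1:ℝ)) i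
          = x i + (t - t₀) * 1 := by
        simp [EuclideanSpace.single_apply]
      rw [e1, e2]; simp [ht₀def]
    · obtain ⟨k, rfl⟩ := Fin.exists_succAbove_eq h
      have e1 : emb j x' t (j.succAbove k) = x' k := emb_apply_succAbove j x' t k
      have e2 : (x + (t - t₀) • EuclideanSpace.single j (1:ℝ)) (j.succAbove k)
          = x (j.succAbove k) + (t - t₀) * 0 := by
        simp [EuclideanSpace.single_apply, (Fin.succAbove_ne j k)]
      rw [e1, e2, hx'def]
      simp [proj]
  have hφψ : φ = fun t => ψ (t - t₀) := by
    funext t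
    rw [hφdef, hψdef]
    simp only
    rw [hembline t]
    congr 2
    module
  have hφder : HasDerivAt φ c t₀ := by
    have hg : HasDerivAt (fun t : ℝ => t - t₀) 1 t₀ := (hasDerivAt_id t₀).sub_const t₀
    have := hψder.comp_of_eq t₀ hg (by simp)
    simp only [Function.comp, mul_one, sub_self] at this
    rw [hφψ]
    exact this
  have hφt₀ : φ t₀ = 2*τ := by rw [hφdef]; simp only; rw [hembx]; exact hx
  obtain ⟨t₁, t₂, ht₁, ht₂, hlt₁, hlt₂⟩ := crossing hφder hcne (by positivity : (0:ℝ) < r/2)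
  rw [hφt₀] at hlt₁ hlt₂
  -- continuous functions of the base point
  have hG1 : Continuous fun p : E₂ => ‖emb j p t₁ - pt3 1 0 0‖ + ‖emb j p t₁‖ :=
    (((emb_lip j t₁).continuous).sub continuous_const).norm.add ((emb_lip j t₁).continuous).norm
  have hG2 : Continuous fun p : E₂ => ‖emb j p t₂ - pt3 1 0 0‖ + ‖emb j p t₂‖ :=
    (((emb_lip j t₂).continuous).sub continuous_const).norm.add ((emb_lip j t₂).continuous).norm
  set V : Set E₂ := {p | ‖emb j p t₁ - pt3 1 0 0‖ + ‖emb j p t₁‖ < 2*τ} ∩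
    ({p | 2*τ < ‖emb j p t₂ - pt3 1 0 0‖ + ‖emb j p t₂‖} ∩ ball x' (r/2)) with hVdef
  have hVopen : IsOpen V :=
    (isOpen_lt hG1 continuous_const).inter
      ((isOpen_lt continuous_const hG2).inter isOpen_ball)
  have hx'V : x' ∈ V := by
    refine ⟨hlt₁, hlt₂, ?_⟩
    exact mem_ball_self (by positivity)
  have hkey : V ⊆ proj j '' ({y : E₃ | ‖y - pt3 1 0 0‖ + ‖y‖ = 2*τ} ∩ ball x r) := by
    rintro p ⟨hp1, hp2, hp3⟩
    have hφp : Continuous fun t : ℝ => ‖emb j p t - pt3 1 0 0‖ + ‖emb j p t‖ :=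
      (((emb_lip_t j p).continuous).sub continuous_const).norm.add
        ((emb_lip_t j p).continuous).norm
    have hmem : (2*τ) ∈ Set.uIcc (‖emb j p t₁ - pt3 1 0 0‖ + ‖emb j p t₁‖)
        (‖emb j p t₂ - pt3 1 0 0‖ + ‖emb j p t₂‖) :=
      Set.mem_uIcc.2 (Or.inl ⟨le_of_lt hp1, le_of_lt hp2⟩)
    obtain ⟨t, ht, hteq⟩ := intermediate_value_uIcc (Continuous.continuousOn hφp) hmem
    have htb : |t - t₀| < r/2 := by
      rw [abs_lt] at ht₁ ht₂ ⊢
      rcases Set.mem_uIcc.mp ht with ⟨h1, h2⟩ | ⟨h1, h2⟩ <;> constructor <;> linarith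
    refine ⟨emb j p t, ⟨hteq, ?_⟩, proj_emb j p t⟩
    rw [mem_ball_iff_norm, ← hembx]
    have hsq := emb_sub_normsq j p x' t t₀
    have hpn : ‖p - x'‖ < r/2 := by
      rw [← dist_eq_norm]; exact hp3
    have h1 : (t - t₀)^2 < (r/2)^2 := by
      have := abs_lt.mp htb; nlinarith
    have h2 : ‖p - x'‖^2 < (r/2)^2 := by nlinarith [norm_nonneg (p - x')]
    have hlt : ‖emb j p t - emb j x' t₀‖^2 < r^2 := by nlinarith
    nlinarith [hlt, norm_nonneg (emb j p t - emb j x' t₀), hr]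
  have hV : 0 < μH[2] V := hVopen.measure_pos _ ⟨x', hx'V⟩
  have him := (proj_lip j).hausdorffMeasure_image_le (by norm_num : (0:ℝ) ≤ 2)
    ({y : E₃ | ‖y - pt3 1 0 0‖ + ‖y‖ = 2*τ} ∩ ball x r)
  simp only [ENNReal.coe_one, ENNReal.one_rpow, one_mul] at him
  calc (0:ℝ≥0∞) < μH[2] V := hV
    _ ≤ μH[2] (proj j '' ({y : E₃ | ‖y - pt3 1 0 0‖ + ‖y‖ = 2*τ} ∩ ball x r)) :=
        measure_mono hkey
    _ ≤ μH[2] ({y : E₃ | ‖y - pt3 1 0 0‖ + ‖y‖ = 2*τ} ∩ ball x r) := him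

/-- continuous nonnegative `q` with vanishing weighted surface integrals over
all ellipsoids `|x−e|+|x| = 2τ`, `τ ∈ (1/2, T/2]`, vanishes on
`{x : 1 < |x|+|x−e| ≤ T}`. -/
theorem stmt10 (T : ℝ) (hT : 1 < T) (q : EuclideanSpace ℝ (Fin 3) → ℝ)
    (hq : Continuous q) (hqnn : ∀ x, 0 ≤ q x)
    (hsurf : ∀ τ ∈ Set.Ioc (1 / 2 : ℝ) (T / 2),
      (∫ x in {x : EuclideanSpace ℝ (Fin 3) | ‖x - pt3 1 0 0‖ + ‖x‖ = 2 * τ},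
        q x / ‖(2 * τ) • x - ‖x‖ • pt3 1 0 0‖ ∂(μH[2])) = 0) :
    ∀ x : EuclideanSpace ℝ (Fin 3),
      ‖x‖ + ‖x - pt3 1 0 0‖ ≤ T → 1 < ‖x‖ + ‖x - pt3 1 0 0‖ → q x = 0 := by
  intro x hxT hx1
  by_contra hqx
  have hqxpos : 0 < q x := lt_of_le_of_ne (hqnn x) (Ne.symm hqx)
  set τ : ℝ := (‖x - pt3 1 0 0‖ + ‖x‖) / 2 with hτdef
  have hτ1 : 1/2 < τ := by rw [hτdef]; linarith
  have hτ2 : τ ≤ T/2 := by rw [hτdef]; linarith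
  have hxE : ‖x - pt3 1 0 0‖ + ‖x‖ = 2*τ := by rw [hτdef]; ring
  set E : Set E₃ := {y : E₃ | ‖y - pt3 1 0 0‖ + ‖y‖ = 2*τ} with hEdef
  set g : E₃ → ℝ := fun y => q y / ‖(2*τ) • y - ‖y‖ • pt3 1 0 0‖ with hgdef
  have hEclosed : IsClosed E :=
    isClosed_eq ((continuous_id.sub continuous_const).norm.add continuous_norm) continuous_const
  have hEmeas : MeasurableSet E := hEclosed.measurableSet
  have hEfin : μH[2] E < ⊤ := ellipsoid_finite τ hτ1
  have hEcomp : IsCompact E := by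
    apply Metric.isCompact_of_isClosed_isBounded hEclosed
    refine (isBounded_closedBall (x := (0:E₃)) (r := 2*τ)).subset ?_
    intro y hy
    rw [mem_closedBall_zero_iff]
    have h1 : ‖y - pt3 1 0 0‖ + ‖y‖ = 2*τ := hy
    linarith [norm_nonneg (y - pt3 1 0 0)]
  have hEne : E.Nonempty := ⟨x, hxE⟩
  set d : E₃ → ℝ := fun y => ‖(2*τ) • y - ‖y‖ • pt3 1 0 0‖ with hddef
  have hdcont : Continuous d := by
    rw [hddef]; fun_prop
  obtain ⟨y₀, hy₀E, hy₀min⟩ := hEcomp.exists_isMinOn hEne hdcont.continuousOn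
  have hm : 0 < d y₀ := norm_pos_iff.2 (denom_ne τ hτ1 y₀ hy₀E)
  obtain ⟨y₁, hy₁E, hy₁max⟩ := hEcomp.exists_isMaxOn hEne hq.continuousOn
  have hgmeas : Measurable g := hq.measurable.div hdcont.measurable
  have hbound : ∀ y ∈ E, ‖g y‖ ≤ q y₁ / d y₀ := by
    intro y hyE
    rw [Real.norm_eq_abs, abs_of_nonneg (div_nonneg (hqnn y) (norm_nonneg _))]
    exact div_le_div₀ (hqnn y₁) (hy₁max hyE) hm (hy₀min hyE)
  have hint : IntegrableOn g E μH[2] := by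
    refine Integrable.mono' (integrableOn_const (C := q y₁ / d y₀) hEfin.ne)
      hgmeas.aestronglyMeasurable.restrict ?_
    rw [ae_restrict_iff' hEmeas]
    exact ae_of_all _ hbound
  have hzero : (∫ y in E, g y ∂(μH[2])) = 0 := hsurf τ ⟨hτ1, hτ2⟩
  have haezero : ∀ᵐ y ∂(μH[2].restrict E), g y = 0 :=
    (integral_eq_zero_iff_of_nonneg_ae
      (ae_of_all _ fun y => div_nonneg (hqnn y) (norm_nonneg _)) hint).mp hzero
  obtain ⟨r, hrpos, hball⟩ : ∃ r > 0, ∀ y ∈ ball x r, 0 < q y := by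
    have hmem : {y | 0 < q y} ∈ nhds x := (isOpen_lt continuous_const hq).mem_nhds hqxpos
    obtain ⟨r, hr, hsub⟩ := Metric.mem_nhds_iff.mp hmem
    exact ⟨r, hr, fun y hy => hsub hy⟩
  have hsubset : E ∩ ball x r ⊆ {y | g y ≠ 0} := by
    rintro y ⟨hyE, hyB⟩
    exact ne_of_gt (div_pos (hball y hyB) (norm_pos_iff.2 (denom_ne τ hτ1 y hyE)))
  have hnullset : MeasurableSet {y : E₃ | g y ≠ 0} :=
    hgmeas (measurableSet_singleton 0).compl
  have hnull : μH[2] ({y : E₃ | g y ≠ 0} ∩ E) = 0 := by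
    have h0 : μH[2].restrict E {y : E₃ | g y ≠ 0} = 0 := by
      rw [ae_iff] at haezero
      exact haezero
    rwa [Measure.restrict_apply hnullset] at h0
  have hposmeas : 0 < μH[2] (E ∩ ball x r) := ellipsoid_pos τ hτ1 x hxE hrpos
  have hEB0 : μH[2] (E ∩ ball x r) = 0 :=
    le_antisymm
      (le_trans (measure_mono fun y hy => Set.mem_inter (hsubset hy) hy.1) (le_of_eq hnull))
      zero_le
  rw [hEB0] at hposmeas
  exact lt_irrefl 0 hposmeas
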